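/- If 2β ∈ ℤ_{≥0}, then the map τ: ℂ[s,t] → ℂ[s,t] given by τ(g(s,t)) = g(s,t)·∏_{n=0}^{2β}(t/2 + β − n) is an injective homomorphism of 𝔏-modules from Θ(λ, α, −β−1, γ) onto the proper submodule V = ℂ[s,t]·∏_{n=0}^{2β}(t/2 + β − n) of Θ(λ, α, β, γ); in particular Θ(λ, α, β, γ) is not simple when 2β ∈ ℤ_{≥0}. -/

import Mathlib

open MvPolynomial

abbrev R2 : Type := MvPolynomial (Fin 2) ℂ

/-- Substitution `g(s,t) ↦ g(s - u, t + v)`. -/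
noncomputable def sh (u v : ℂ) : R2 →ₐ[ℂ] R2 := aeval ![X 0 - C u, X 1 + C v]

/-- Action of `e_i` in `Θ(λ,α,β,γ)`. -/
noncomputable def thE (lam a b : ℂ) (i : ℤ) (g : R2) : R2 :=
  C (lam ^ i * a) * (C 2⁻¹ * X 1 + C b) * sh (i : ℂ) (-2) g

/-- Action of `f_i` in `Θ(λ,α,β,γ)`. -/
noncomputable def thF (lam a b : ℂ) (i : ℤ) (g : R2) : R2 :=
  C (-(lam ^ i / a)) * (C 2⁻¹ * X 1 - C b) * sh (i : ℂ) 2 g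

/-- Action of `h_i`. -/
noncomputable def opH (lam : ℂ) (i : ℤ) (g : R2) : R2 :=
  C (lam ^ i) * X 1 * sh (i : ℂ) 0 g

/-- Action of `d_i`. -/
noncomputable def opD (lam c : ℂ) (i : ℤ) (g : R2) : R2 :=
  C (lam ^ i) * (X 0 + C ((i : ℂ) * c)) * sh (i : ℂ) 0 g
lemma shFactor (u v c : ℂ) : sh u v (C 2⁻¹ * X 1 + C c) = C 2⁻¹ * X 1 + C (c + 2⁻¹ * v) := by
  simp [sh, aeval_C, aeval_X]
  ring_nf

lemma shProd (u v b : ℂ) (N : ℕ) :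
    sh u v (∏ n ∈ Finset.range (N + 1), (C 2⁻¹ * X 1 + C (b - (n : ℂ)))) =
    ∏ n ∈ Finset.range (N + 1), (C 2⁻¹ * X 1 + C (b - (n : ℂ) + 2⁻¹ * v)) := by
  rw [map_prod]
  exact Finset.prod_congr rfl fun n _ => shFactor u v _

lemma evalProd (b t : ℂ) (N : ℕ) :
    eval (fun j : Fin 2 => if j = 1 then t else 0)
      (∏ n ∈ Finset.range (N + 1), (C 2⁻¹ * X 1 + C (b - (n : ℂ)))) =
    ∏ n ∈ Finset.range (N + 1), (2⁻¹ * t + (b - (n : ℂ))) := by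
  rw [map_prod]
  exact Finset.prod_congr rfl fun n _ => by simp

lemma tele (f : ℕ → R2) (N : ℕ) :
    f (N+1) * ∏ n ∈ Finset.range (N+1), f n = f 0 * ∏ n ∈ Finset.range (N+1), f (n+1) := by
  rw [mul_comm, ← Finset.prod_range_succ, Finset.prod_range_succ', mul_comm]

lemma keyProd (b : ℂ) (N : ℕ) :
    (C 2⁻¹ * X 1 + C (b - ((N:ℂ)+1))) * ∏ n ∈ Finset.range (N+1), (C 2⁻¹ * X 1 + C (b - (n:ℂ)))
    = (C 2⁻¹ * X 1 + C b) * ∏ n ∈ Finset.range (N+1), ((C 2⁻¹ * X 1 : R2) + C (b - (n:ℂ) - 1)) := by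
  have h := tele (fun n : ℕ => C 2⁻¹ * X 1 + C (b - (n:ℂ))) N
  push_cast at h
  simp only [sub_zero] at h
  refine h.trans (congrArg (fun z => (C 2⁻¹ * X 1 + C b) * z) ?_)
  exact Finset.prod_congr rfl fun x _ => by rw [(by ring : b - ((x:ℂ) + 1) = b - x - 1)]

/-- For 2β ∈ ℤ₊, multiplication by P(t) = ∏_{n=0}^{2β}(t/2 + β − n) is an injective
𝔏-module homomorphism Θ(λ,α,−β−1,γ) → Θ(λ,α,β,γ) with image the proper invariant
submodule V = ℂ[s,t]·P; in particular Θ(λ,α,β,γ) is not simple. -/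
theorem stmt19 (lam a : ℂ) (hlam : lam ≠ 0) (ha : a ≠ 0) (b c : ℂ)
    (N : ℕ) (hN : (N : ℂ) = 2 * b)
    (P : R2) (hP : P = ∏ n ∈ Finset.range (N + 1), (C 2⁻¹ * X 1 + C (b - (n : ℂ))))
    (τ : R2 → R2) (hτ : ∀ g : R2, τ g = g * P) :
    Function.Injective τ ∧
    (∀ (i : ℤ) (g : R2), τ (thE lam a (-b - 1) i g) = thE lam a b i (τ g)) ∧
    (∀ (i : ℤ) (g : R2), τ (thF lam a (-b - 1) i g) = thF lam a b i (τ g)) ∧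
    (∀ (i : ℤ) (g : R2), τ (opH lam i g) = opH lam i (τ g)) ∧
    (∀ (i : ℤ) (g : R2), τ (opD lam c i g) = opD lam c i (τ g)) ∧
    Set.range τ = (Ideal.span {P} : Ideal R2) ∧
    (Ideal.span {P} : Ideal R2) ≠ ⊤ ∧
    (Ideal.span {P} : Ideal R2) ≠ ⊥ ∧
    (∀ i : ℤ, ∀ g ∈ (Ideal.span {P} : Ideal R2), thE lam a b i g ∈ Ideal.span {P}) ∧
    (∀ i : ℤ, ∀ g ∈ (Ideal.span {P} : Ideal R2), thF lam a b i g ∈ Ideal.span {P}) ∧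
    (∀ i : ℤ, ∀ g ∈ (Ideal.span {P} : Ideal R2), opH lam i g ∈ Ideal.span {P}) ∧
    (∀ i : ℤ, ∀ g ∈ (Ideal.span {P} : Ideal R2), opD lam c i g ∈ Ideal.span {P}) := by
  -- P is nonzero
  have hP0 : P ≠ 0 := by
    intro h0
    have := evalProd b (-2*b - 2) N
    rw [← hP, h0, map_zero] at this
    have h2 : ∀ n ∈ Finset.range (N+1), (2⁻¹ * (-2*b-2) + (b - (n:ℂ))) ≠ 0 := by
      intro n _
      have : 2⁻¹ * (-2*b-2) + (b - (n:ℂ)) = -(((n:ℂ)+1)) := by ring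
      rw [this, neg_ne_zero]
      exact_mod_cast Nat.cast_add_one_ne_zero (R := ℂ) n
    exact Finset.prod_ne_zero_iff.mpr h2 this.symm
  -- key identity for E
  have keyE : ∀ i : ℂ, (C 2⁻¹ * X 1 + C (-b - 1)) * P = (C 2⁻¹ * X 1 + C b) * sh i (-2) P := by
    intro i
    rw [hP, shProd]
    have e1 : (-b - 1 : ℂ) = b - ((N:ℂ)+1) := by rw [hN]; ring
    have e2 := keyProd b N
    rw [e1, e2]
    refine congrArg (fun z => (C 2⁻¹ * X 1 + C b) * z) ?_
    exact Finset.prod_congr rfl fun n _ => by rw [(by ring : b - (n:ℂ) - 1 = b - n + 2⁻¹ * (-2))]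
  -- key identity for F
  have keyF : ∀ i : ℂ, (C 2⁻¹ * X 1 - C (-b - 1)) * P = (C 2⁻¹ * X 1 - C b) * sh i 2 P := by
    intro i
    rw [hP, shProd]
    have e2 := keyProd (b+1) N
    have e1 : (C 2⁻¹ * X 1 - C (-b-1) : R2) = C 2⁻¹ * X 1 + C (b+1) := by
      rw [sub_eq_add_neg, ← C_neg]; ring_nf
    have e3 : (C 2⁻¹ * X 1 - C b : R2) = C 2⁻¹ * X 1 + C (b+1 - ((N:ℂ)+1)) := by
      rw [sub_eq_add_neg, ← C_neg]
      congr 1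
      rw [hN]; ring_nf
    rw [e1, e3]
    -- now match the two products
    have p1 : ∏ n ∈ Finset.range (N+1), ((C 2⁻¹ * X 1 : R2) + C (b+1 - (n:ℂ) - 1))
        = ∏ n ∈ Finset.range (N+1), ((C 2⁻¹ * X 1 : R2) + C (b - (n:ℂ))) := by
      exact Finset.prod_congr rfl fun n _ => by rw [(by ring : b + 1 - (n:ℂ) - 1 = b - n)]
    have p2 : ∏ n ∈ Finset.range (N+1), ((C 2⁻¹ * X 1 : R2) + C (b + 1 - (n:ℂ)))
        = ∏ n ∈ Finset.range (N+1), ((C 2⁻¹ * X 1 : R2) + C (b - (n:ℂ) + 2⁻¹ * 2)) := by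
      exact Finset.prod_congr rfl fun n _ => by rw [(by ring : b + 1 - (n:ℂ) = b - n + 2⁻¹ * 2)]
    rw [← p1, ← p2]
    exact e2.symm
  -- sh i 0 fixes P
  have sh0 : ∀ i : ℂ, sh i 0 P = P := by
    intro i
    rw [hP, shProd]
    exact Finset.prod_congr rfl fun n _ => by norm_num
  have hE : ∀ (i : ℤ) (g : R2), τ (thE lam a (-b - 1) i g) = thE lam a b i (τ g) := by
    intro i g
    rw [hτ, hτ, thE, thE, map_mul (sh (i:ℂ) (-2)) g P]
    linear_combination (C (lam ^ i * a) * sh (i:ℂ) (-2) g) * keyE (i:ℂ)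
  have hF : ∀ (i : ℤ) (g : R2), τ (thF lam a (-b - 1) i g) = thF lam a b i (τ g) := by
    intro i g
    rw [hτ, hτ, thF, thF, map_mul (sh (i:ℂ) 2) g P]
    linear_combination (C (-(lam ^ i / a)) * sh (i:ℂ) 2 g) * keyF (i:ℂ)
  have hH : ∀ (i : ℤ) (g : R2), τ (opH lam i g) = opH lam i (τ g) := by
    intro i g
    rw [hτ, hτ, opH, opH, map_mul (sh (i:ℂ) 0) g P, sh0]
    ring
  have hD : ∀ (i : ℤ) (g : R2), τ (opD lam c i g) = opD lam c i (τ g) := by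
    intro i g
    rw [hτ, hτ, opD, opD, map_mul (sh (i:ℂ) 0) g P, sh0]
    ring
  have hrange : Set.range τ = (Ideal.span {P} : Ideal R2) := by
    ext x
    constructor
    · rintro ⟨g, rfl⟩
      exact Ideal.mem_span_singleton.mpr ⟨g, by rw [hτ, mul_comm]⟩
    · intro hx
      obtain ⟨q, hq⟩ := Ideal.mem_span_singleton.mp hx
      exact ⟨q, by rw [hτ, hq, mul_comm]⟩
  refine ⟨?_, hE, hF, hH, hD, hrange, ?_, ?_, ?_, ?_, ?_, ?_⟩
  · intro x y h
    rw [hτ, hτ] at h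
    exact mul_right_cancel₀ hP0 h
  · intro htop
    have hu := Ideal.span_singleton_eq_top.mp htop
    have := hu.map (eval (fun j : Fin 2 => if j = 1 then (-2*b) else 0))
    rw [hP, evalProd] at this
    have hz : ∏ n ∈ Finset.range (N+1), (2⁻¹ * (-2*b) + (b - (n:ℂ))) = 0 := by
      apply Finset.prod_eq_zero (Finset.mem_range.mpr (Nat.succ_pos N))
      push_cast
      ring
    rw [hz] at this
    exact not_isUnit_zero this
  · intro hbot
    exact hP0 (Ideal.span_singleton_eq_bot.mp hbot)
  · intro i g hg
    obtain ⟨q, hq⟩ := Ideal.mem_span_singleton.mp hg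
    have : g = τ q := by rw [hτ, hq, mul_comm]
    rw [this, ← hE i q, hτ]
    exact Ideal.mem_span_singleton.mpr (dvd_mul_left P _)
  · intro i g hg
    obtain ⟨q, hq⟩ := Ideal.mem_span_singleton.mp hg
    have : g = τ q := by rw [hτ, hq, mul_comm]
    rw [this, ← hF i q, hτ]
    exact Ideal.mem_span_singleton.mpr (dvd_mul_left P _)
  · intro i g hg
    obtain ⟨q, hq⟩ := Ideal.mem_span_singleton.mp hg
    have : g = τ q := by rw [hτ, hq, mul_comm]
    rw [this, ← hH i q, hτ]
    exact Ideal.mem_span_singleton.mpr (dvd_mul_left P _)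
  · intro i g hg
    obtain ⟨q, hq⟩ := Ideal.mem_span_singleton.mp hg
    have : g = τ q := by rw [hτ, hq, mul_comm]
    rw [this, ← hD i q, hτ]
    exact Ideal.mem_span_singleton.mpr (dvd_mul_left P _)
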